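/- Let R be a finite zero-symmetric local nearring of order p³ whose subgroup L of non-invertible elements is cyclic and nontrivial. If R is not isomorphic to Z/p³Z and R is not a nearfield, then L is not cyclic of order p², i.e., the subgroup of non-invertible elements of any local nearring of order p³ that is neither Z/p³Z nor a nearfield is elementary abelian of order p². -/

import Mathlib

open Function AddSubgroup

/-- Bundle of nearring data used in auxiliary lemmas. -/
structure NRS (R : Type*) [AddGroup R] where
  mul : R → R → R
  i : R
  hassoc : ∀ x y z : R, mul (mul x y) z = mul x (mul y z)
  hdist : ∀ x y z : R, mul x (y + z) = mul x y + mul x z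
  hid : ∀ x : R, mul i x = x ∧ mul x i = x

namespace NRS

variable {R : Type*} [AddGroup R] (N : NRS R)

/-- invertible elements -/
def IsU (x : R) : Prop := ∃ v : R, N.mul x v = N.i ∧ N.mul v x = N.i

/-- left multiplication as an additive homomorphism -/
def lam (x : R) : R →+ R := AddMonoidHom.mk' (N.mul x) (N.hdist x)

@[simp] lemma lam_apply (x y : R) : N.lam x y = N.mul x y := rfl

lemma mul_zero' (x : R) : N.mul x 0 = 0 := (N.lam x).map_zero

lemma mul_nsmul' (x y : R) (n : ℕ) : N.mul x (n • y) = n • N.mul x y :=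
  (N.lam x).map_nsmul n y

lemma mul_zsmul' (x y : R) (k : ℤ) : N.mul x (k • y) = k • N.mul x y :=
  (N.lam x).map_zsmul k y

lemma mul_const (x u y : R) : N.mul x (N.mul 0 y) = N.mul 0 y := by
  have h : N.mul x (N.mul 0 y) = N.mul (N.mul x 0) y := (N.hassoc x 0 y).symm
  rw [h, N.mul_zero']

lemma i_ne_zero [Fintype R] (h1 : 1 < Fintype.card R) : N.i ≠ 0 := by
  intro h
  have hz : ∀ x : R, x = 0 := fun x => by rw [← (N.hid x).2, h, N.mul_zero']
  rw [Fintype.one_lt_card_iff] at h1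
  obtain ⟨x, y, hxy⟩ := h1
  exact hxy ((hz x).trans (hz y).symm)

section Fin

variable [Fintype R]

lemma unit_of_right_inv {x w : R} (hw : N.mul x w = N.i) : N.IsU x := by
  have hinj : Function.Injective (N.mul w) := by
    intro a b hab
    have h : N.mul x (N.mul w a) = N.mul x (N.mul w b) := by rw [hab]
    rwa [← N.hassoc, ← N.hassoc, hw, (N.hid a).1, (N.hid b).1] at h
  obtain ⟨z, hz⟩ := (Finite.injective_iff_surjective.mp hinj) N.i
  have hwx : N.mul w x = N.i := by
    calc N.mul w x = N.mul w (N.mul x (N.mul w z)) := by rw [hz, (N.hid x).2]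
      _ = N.mul w (N.mul (N.mul x w) z) := by rw [N.hassoc]
      _ = N.mul w (N.mul N.i z) := by rw [hw]
      _ = N.i := by rw [(N.hid z).1, hz]
  exact ⟨w, hw, hwx⟩

lemma unit_of_left_inv {x w : R} (hw : N.mul w x = N.i) : N.IsU x := by
  have hinj : Function.Injective (N.mul x) := by
    intro a b hab
    have h : N.mul w (N.mul x a) = N.mul w (N.mul x b) := by rw [hab]
    rwa [← N.hassoc, ← N.hassoc, hw, (N.hid a).1, (N.hid b).1] at h
  obtain ⟨z, hz⟩ := (Finite.injective_iff_surjective.mp hinj) N.i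
  exact N.unit_of_right_inv hz

lemma not_isU_mul_left {x : R} (hx : ¬ N.IsU x) (y : R) : ¬ N.IsU (N.mul x y) := by
  rintro ⟨v, hv1, hv2⟩
  rw [N.hassoc] at hv1
  exact hx (N.unit_of_right_inv hv1)

lemma not_isU_mul_right {y : R} (hy : ¬ N.IsU y) (x : R) : ¬ N.IsU (N.mul x y) := by
  rintro ⟨v, hv1, hv2⟩
  rw [← N.hassoc] at hv2
  exact hy (N.unit_of_left_inv hv2)

lemma isU_i : N.IsU N.i := ⟨N.i, (N.hid N.i).1, (N.hid N.i).1⟩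

lemma lam_injective {x : R} (hx : N.IsU x) : Function.Injective (N.mul x) := by
  obtain ⟨v, hv1, hv2⟩ := hx
  intro a b hab
  have h : N.mul v (N.mul x a) = N.mul v (N.mul x b) := by rw [hab]
  rwa [← N.hassoc, ← N.hassoc, hv2, (N.hid a).1, (N.hid b).1] at h

end Fin

end NRS

lemma card_ker_mul_card_range {R : Type*} [AddGroup R] (f : R →+ R) :
    Nat.card f.ker * Nat.card f.range = Nat.card R := by
  rw [← AddSubgroup.index_ker]
  exact AddSubgroup.card_mul_index f.ker

/-- subgroup equality from inclusion plus cardinality -/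
lemma addsub_eq_of_le_of_card_le {R : Type*} [AddGroup R] [Fintype R]
    {H K : AddSubgroup R} (h : H ≤ K) (hc : Nat.card K ≤ Nat.card H) :
    (H : Set R) = (K : Set R) := by
  apply Set.eq_of_subset_of_ncard_le h ?_ (Set.toFinite _)
  rwa [← Nat.card_coe_set_eq, ← Nat.card_coe_set_eq]

section Main

variable {R : Type*} [AddGroup R] [Fintype R]

/-- If `u` is in the kernel of left multiplication by `x` and has right inverse `v`,
then `x = 0 * v`. -/
lemma eq_zero_mul {N : NRS R} {x u v : R} (hxu : N.mul x u = 0)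
    (hv : N.mul u v = N.i) : x = N.mul 0 v := by
  calc x = N.mul x N.i := ((N.hid x).2).symm
    _ = N.mul x (N.mul u v) := by rw [hv]
    _ = N.mul (N.mul x u) v := (N.hassoc x u v).symm
    _ = N.mul 0 v := by rw [hxu]

/-- There is a unit in the kernel of left multiplication by a non-unit `x`,
provided the set of non-units is small. -/
lemma exists_unit_ker (N : NRS R) (LS : AddSubgroup R)
    (hmem : ∀ x, x ∈ LS ↔ ¬ N.IsU x) {x : R} (hx : x ∈ LS)
    (hlt : Nat.card LS * Nat.card LS < Fintype.card R) :
    ∃ u : R, N.mul x u = 0 ∧ N.IsU u := by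
  set f := N.lam x with hf
  have hrange : f.range ≤ LS := by
    rintro y ⟨z, rfl⟩
    exact (hmem _).mpr (N.not_isU_mul_left ((hmem x).mp hx) z)
  have hcr : Nat.card f.range ≤ Nat.card LS := AddSubgroup.card_le_of_le hrange
  have hprod := card_ker_mul_card_range f
  rw [← Nat.card_eq_fintype_card] at hlt
  have hker : ¬ (f.ker ≤ LS) := by
    intro hle
    have h1 : Nat.card f.ker ≤ Nat.card LS := AddSubgroup.card_le_of_le hle
    have h2 : Nat.card f.ker * Nat.card f.range ≤ Nat.card LS * Nat.card LS :=
      Nat.mul_le_mul h1 hcr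
    rw [hprod] at h2
    exact absurd hlt (not_lt.mpr h2)
  obtain ⟨u, hu, huL⟩ := SetLike.not_le_iff_exists.mp hker
  exact ⟨u, hu, not_not.mp (fun h => huL ((hmem u).mpr h))⟩

/-- From `hnotring`: the additive order of the identity divides `p ^ 2`. -/
lemma ord_i_sq (N : NRS R) (p : ℕ) (hp : p.Prime) (hcard : Fintype.card R = p ^ 3)
    (hnotring : ¬ ∃ e : R ≃ ZMod (p ^ 3),
      (∀ x y : R, e (x + y) = e x + e y) ∧ ∀ x y : R, e (N.mul x y) = e x * e y) :
    (p ^ 2) • N.i = 0 := by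
  by_contra hne
  haveI : NeZero (p ^ 3) := ⟨pow_ne_zero _ hp.ne_zero⟩
  -- additive order of i is p ^ 3
  have hdvd : addOrderOf N.i ∣ p ^ 3 := by
    rw [← Nat.card_eq_fintype_card] at hcard
    exact hcard ▸ addOrderOf_dvd_natCard N.i
  obtain ⟨k, hk3, hk⟩ := (Nat.dvd_prime_pow hp).mp hdvd
  have hk3' : k = 3 := by
    rcases Nat.lt_or_ge k 3 with h | h
    · exfalso
      apply hne
      apply addOrderOf_dvd_iff_nsmul_eq_zero.mp
      rw [hk]
      exact pow_dvd_pow p (by omega)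
    · omega
  have hord : addOrderOf N.i = p ^ 3 := by rw [hk, hk3']
  -- the hom ZMod (p^3) →+ R
  have hzero : (zmultiplesHom R N.i) ((p ^ 3 : ℕ) : ℤ) = 0 := by
    rw [zmultiplesHom_apply, natCast_zsmul, ← hord, addOrderOf_nsmul_eq_zero]
  set ψ : ZMod (p ^ 3) →+ R := ZMod.lift (p ^ 3) ⟨zmultiplesHom R N.i, hzero⟩ with hψ
  have hψcoe : ∀ k : ℤ, ψ ((k : ℤ) : ZMod (p ^ 3)) = k • N.i := by
    intro k
    rw [hψ, ZMod.lift_coe, zmultiplesHom_apply]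
  -- surjective
  have htop : (zmultiples N.i : AddSubgroup R) = ⊤ := by
    apply AddSubgroup.eq_top_of_card_eq
    rw [Nat.card_zmultiples, hord, Nat.card_eq_fintype_card, hcard]
  have hsurj : Function.Surjective ψ := by
    intro r
    have hr : r ∈ zmultiples N.i := htop ▸ AddSubgroup.mem_top r
    obtain ⟨k, hk⟩ := AddSubgroup.mem_zmultiples_iff.mp hr
    exact ⟨((k : ℤ) : ZMod (p ^ 3)), by rw [hψcoe, hk]⟩
  have hbij : Function.Bijective ψ :=
    (Fintype.bijective_iff_surjective_and_card ψ).mpr ⟨hsurj, by rw [ZMod.card, hcard]⟩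
  set E := AddEquiv.ofBijective ψ hbij with hE
  have hEapp : ∀ a, E a = ψ a := fun a => rfl
  -- multiplicativity on the ZMod side
  have hEm : ∀ a b : ZMod (p ^ 3), N.mul (E a) (E b) = E (a * b) := by
    intro a b
    obtain ⟨m, rfl⟩ := ZMod.natCast_zmod_surjective a
    obtain ⟨n, rfl⟩ := ZMod.natCast_zmod_surjective b
    have hm : ∀ m : ℕ, E ((m : ℕ) : ZMod (p ^ 3)) = (m : ℕ) • N.i := by
      intro m
      rw [hEapp, ← Int.cast_natCast, hψcoe, natCast_zsmul]
    rw [hm m, hm n, ← Nat.cast_mul, hm (m * n)]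
    rw [N.mul_nsmul', (N.hid _).2, mul_nsmul]
  exact hnotring ⟨E.symm.toEquiv, fun x y => map_add E.symm x y, fun x y => by
    show E.symm (N.mul x y) = E.symm x * E.symm y
    have h := hEm (E.symm x) (E.symm y)
    rw [E.apply_symm_apply, E.apply_symm_apply] at h
    rw [h, AddEquiv.symm_apply_apply]⟩

/-- Main lemma A : the subgroup of non-units cannot have cardinality `p`. -/
lemma main_A (N : NRS R) (p : ℕ) (hp : p.Prime) (hcard : Fintype.card R = p ^ 3)
    (LS : AddSubgroup R) (hmem : ∀ x, x ∈ LS ↔ ¬ N.IsU x)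
    {a : R} (ha0 : a ≠ 0) (haL : a ∈ LS)
    (hp2i : (p ^ 2) • N.i = 0) (hA : Nat.card LS = p) : False := by
  haveI : Fact p.Prime := ⟨hp⟩
  have hp2 : 2 ≤ p := hp.two_le
  have hsmall : Nat.card LS * Nat.card LS < Fintype.card R := by
    rw [hA, hcard]; nlinarith
  set c := p • N.i with hc
  have hxc : ∀ x : R, N.mul x c = p • x := fun x => by
    rw [hc, N.mul_nsmul', (N.hid x).2]
  -- c is a non-unit
  have hcL : c ∈ LS := by
    rw [hmem]
    rintro ⟨v, hv1, hv2⟩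
    -- right multiplication by c is injective, but p-torsion exists
    obtain ⟨t, ht⟩ := exists_prime_addOrderOf_dvd_card p (by rw [hcard]; exact dvd_pow_self p (by omega))
    have ht0 : t ≠ 0 := by
      intro h; rw [h, addOrderOf_zero] at ht; omega
    have htp : p • t = 0 := by rw [← ht]; exact addOrderOf_nsmul_eq_zero t
    have h1 : N.mul t c = N.mul 0 c := by
      rw [hxc, hxc, htp, smul_zero]
    have h2 : N.mul (N.mul t c) v = N.mul (N.mul 0 c) v := by rw [h1]
    rw [N.hassoc, N.hassoc, hv1, (N.hid t).2, (N.hid 0).2] at h2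
    exact ht0 h2
  by_cases hc0 : c = 0
  · -- case (iii) : exponent p
    obtain ⟨u, hau, huU⟩ := exists_unit_ker N LS hmem haL hsmall
    obtain ⟨v, hv1, hv2⟩ := huU
    have haeq : a = N.mul 0 v := eq_zero_mul hau hv1
    have h0a : N.mul 0 a = a := by
      rw [haeq]; exact N.mul_const 0 0 v
    -- LS = zmultiples a
    have hgen : (zmultiples a : Set R) = (LS : Set R) := by
      apply addsub_eq_of_le_of_card_le
      · exact (zmultiples_le).mpr haL
      · rw [Nat.card_zmultiples, hA]
        have hdvd : addOrderOf a ∣ p := hA ▸ AddSubgroup.addOrderOf_dvd_natCard LS haL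
        have hne1 : addOrderOf a ≠ 1 :=
          fun h => ha0 (AddMonoid.addOrderOf_eq_one_iff.mp h)
        rcases (Nat.dvd_prime hp).mp hdvd with h | h
        · exact absurd h hne1
        · omega
    have hR0L : ∀ x : R, N.mul 0 x = 0 → x ∈ LS → x = 0 := by
      intro x h0x hxLS
      have hxz : x ∈ zmultiples a := by
        rw [← SetLike.mem_coe, hgen] at *
        exact hxLS
      obtain ⟨k, hk⟩ := AddSubgroup.mem_zmultiples_iff.mp hxz
      rw [← hk, N.mul_zsmul', h0a, hk] at h0x
      exact h0x
    -- two kernels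
    set K1 := (N.lam 0).ker with hK1
    set K2 := (N.lam a).ker with hK2
    have hidx : ∀ x : R, x ∈ LS → (N.lam x).ker.index ≤ p := by
      intro x hx
      rw [AddSubgroup.index_ker]
      have : (N.lam x).range ≤ LS := by
        rintro y ⟨z, rfl⟩
        exact (hmem _).mpr (N.not_isU_mul_left ((hmem x).mp hx) z)
      calc Nat.card (N.lam x).range ≤ Nat.card LS := AddSubgroup.card_le_of_le this
        _ = p := hA
    have h0LS : (0 : R) ∈ LS := by
      rw [hmem]
      rintro ⟨v', hv1', hv2'⟩
      have : N.i = 0 := by rw [← hv2', N.mul_zero']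
      exact N.i_ne_zero (by rw [hcard]; nlinarith) this
    have hidx1 : K1.index ≤ p := hidx 0 h0LS
    have hidx2 : K2.index ≤ p := hidx a haL
    have hidx12 : (K1 ⊓ K2).index ≤ p * p :=
      le_trans AddSubgroup.index_inf_le (Nat.mul_le_mul hidx1 hidx2)
    have hcard12 : p ≤ Nat.card (K1 ⊓ K2 : AddSubgroup R) := by
      have h := AddSubgroup.card_mul_index (K1 ⊓ K2)
      rw [show (Nat.card R) = p ^ 3 by rw [Nat.card_eq_fintype_card, hcard]] at h
      by_contra hlt
      push_neg at hlt
      have : Nat.card (K1 ⊓ K2 : AddSubgroup R) * (K1 ⊓ K2).index < p * (p * p) :=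
        Nat.mul_lt_mul_of_lt_of_le hlt hidx12 (by
          rcases Nat.eq_zero_or_pos ((K1 ⊓ K2).index) with h0 | h0
          · exfalso; rw [h0, Nat.mul_zero] at h; nlinarith
          · omega)
      rw [h] at this; nlinarith
    -- pick a nonzero element of the intersection
    have hnontriv : K1 ⊓ K2 ≠ ⊥ := by
      intro hbot
      rw [← AddSubgroup.card_eq_one] at hbot
      omega
    obtain ⟨r, hr, hrne⟩ : ∃ r ∈ K1 ⊓ K2, r ≠ 0 := by
      by_contra hcon
      push_neg at hcon
      exact hnontriv ((AddSubgroup.eq_bot_iff_forall _).mpr hcon)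
    have hr1 : N.mul 0 r = 0 := hr.1
    have hr2 : N.mul a r = 0 := hr.2
    have hrU : N.IsU r := by
      by_contra hrL
      exact hrne (hR0L r hr1 ((hmem r).mpr hrL))
    -- the injection from K1 into K1 ⊓ K2
    have hinj : ∀ s : R, s ∈ K1 → N.mul r s ∈ K1 ⊓ K2 := by
      intro s hs
      constructor
      · show N.mul 0 (N.mul r s) = 0
        rw [← N.hassoc, hr1]
        exact hs
      · show N.mul a (N.mul r s) = 0
        rw [← N.hassoc, hr2]
        exact hs
    have hcardle : Nat.card K1 ≤ Nat.card (K1 ⊓ K2 : AddSubgroup R) := by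
      have : Function.Injective (fun s : K1 => (⟨N.mul r s, hinj s s.2⟩ : (K1 ⊓ K2 : AddSubgroup R))) := by
        intro s t hst
        have := congrArg (fun z : (K1 ⊓ K2 : AddSubgroup R) => (z : R)) hst
        exact Subtype.ext (N.lam_injective hrU this)
      exact Nat.card_le_card_of_injective _ this
    have heq : ((K1 ⊓ K2 : AddSubgroup R) : Set R) = (K1 : Set R) :=
      addsub_eq_of_le_of_card_le inf_le_left hcardle
    -- i belongs to K1 hence to K2, contradiction
    have hiK1 : N.i ∈ K1 := by
      show N.mul 0 N.i = 0
      exact (N.hid 0).2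
    have hiK2 : N.i ∈ (K1 ⊓ K2 : AddSubgroup R) := by
      rw [← SetLike.mem_coe, heq]
      exact hiK1
    have : N.mul a N.i = 0 := hiK2.2
    rw [(N.hid a).2] at this
    exact ha0 this
  · -- case (ii) : c ≠ 0
    obtain ⟨u, hcu, huU⟩ := exists_unit_ker N LS hmem hcL hsmall
    obtain ⟨v, hv1, hv2⟩ := huU
    have hceq : c = N.mul 0 v := eq_zero_mul hcu hv1
    have hall : ∀ x : R, N.mul x c = c := by
      intro x
      rw [hceq]
      exact N.mul_const x 0 v
    have h1 : p • (0 : R) = c := by rw [← hxc 0, hall 0]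
    rw [smul_zero] at h1
    exact hc0 h1.symm

/-- Main lemma B : no element of the non-units has additive order `p ^ 2`. -/
lemma main_B (N : NRS R) (p : ℕ) (hp : p.Prime) (hcard : Fintype.card R = p ^ 3)
    (LS : AddSubgroup R) (hmem : ∀ x, x ∈ LS ↔ ¬ N.IsU x)
    (hB : Nat.card LS = p ^ 2) (hp2i : (p ^ 2) • N.i = 0)
    {l : R} (hl : l ∈ LS) (hpl : p • l ≠ 0) : False := by
  haveI : Fact p.Prime := ⟨hp⟩
  have hp2 : 2 ≤ p := hp.two_le
  -- additive order of l is p^2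
  have hordl : addOrderOf l = p ^ 2 := by
    have hdvd : addOrderOf l ∣ p ^ 2 := hB ▸ AddSubgroup.addOrderOf_dvd_natCard LS hl
    obtain ⟨k, hk2, hk⟩ := (Nat.dvd_prime_pow hp).mp hdvd
    have : k = 2 := by
      rcases Nat.lt_or_ge k 2 with h | h
      · exfalso
        apply hpl
        apply addOrderOf_dvd_iff_nsmul_eq_zero.mp
        rw [hk]
        exact dvd_trans (pow_dvd_pow p (show k ≤ 1 by omega)) (dvd_of_eq (pow_one p))
      · omega
    rw [hk, this]
  -- LS is generated by l
  have hgen : (zmultiples l : Set R) = (LS : Set R) := by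
    apply addsub_eq_of_le_of_card_le
    · exact (zmultiples_le).mpr hl
    · rw [Nat.card_zmultiples, hordl, hB]
  -- p-torsion elements of LS lie in zmultiples (p • l)
  have hPtor : ∀ x : R, x ∈ LS → p • x = 0 → ∃ k : ℤ, k • (p • l) = x := by
    intro x hx hpx
    have hxz : x ∈ zmultiples l := by
      rw [← SetLike.mem_coe, hgen]; exact hx
    obtain ⟨k, hk⟩ := AddSubgroup.mem_zmultiples_iff.mp hxz
    have h1 : ((p : ℤ) * k) • l = 0 := by
      rw [mul_zsmul, natCast_zsmul, hk]
      exact hpx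
    have h2 : ((addOrderOf l : ℕ) : ℤ) ∣ (p : ℤ) * k :=
      addOrderOf_dvd_iff_zsmul_eq_zero.mpr h1
    rw [hordl] at h2
    obtain ⟨m, hm⟩ := h2
    have hk' : k = (p : ℤ) * m := by
      have hpne : (p : ℤ) ≠ 0 := by exact_mod_cast hp.ne_zero
      apply mul_left_cancel₀ hpne
      rw [hm]; push_cast; ring
    refine ⟨m, ?_⟩
    calc m • (p • l) = m • ((p : ℤ) • l) := by rw [natCast_zsmul]
      _ = (m * (p : ℤ)) • l := (mul_zsmul l m (p : ℤ)).symm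
      _ = x := by rw [mul_comm, ← hk', hk]
  set c := p • N.i with hc
  have hxc : ∀ x : R, N.mul x c = p • x := fun x => by
    rw [hc, N.mul_nsmul', (N.hid x).2]
  have hpc : p • c = 0 := by
    rw [hc, ← mul_nsmul, ← pow_two]
    exact hp2i
  have hc0 : c ≠ 0 := by
    intro h
    apply hpl
    rw [← hxc l, h, N.mul_zero']
  have hcLS : c ∈ LS := by
    rw [hmem]
    rintro ⟨v, hv1, hv2⟩
    have h1 : N.mul (N.mul (p • l) c) v = N.mul (N.mul 0 c) v := by
      rw [hxc, hxc, ← mul_nsmul, ← pow_two, addOrderOf_dvd_iff_nsmul_eq_zero.mp (by rw [hordl]), smul_zero]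
    rw [N.hassoc, N.hassoc, hv1, (N.hid _).2, (N.hid 0).2] at h1
    exact hpl h1
  -- kernel of left multiplication by l
  set f := N.lam l with hf
  have hrange_le : f.range ≤ LS := by
    rintro y ⟨z, rfl⟩
    exact (hmem _).mpr (N.not_isU_mul_left ((hmem l).mp hl) z)
  have hzml : zmultiples l ≤ f.range := by
    intro x hx
    obtain ⟨k, hk⟩ := AddSubgroup.mem_zmultiples_iff.mp hx
    exact ⟨k • N.i, by rw [← hk]; show N.mul l (k • N.i) = k • l; rw [N.mul_zsmul', (N.hid l).2]⟩
  have hrange_card : Nat.card f.range = p ^ 2 := by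
    apply le_antisymm
    · rw [← hB]; exact AddSubgroup.card_le_of_le hrange_le
    · have := AddSubgroup.card_le_of_le hzml
      rwa [Nat.card_zmultiples, hordl] at this
  have hker_card : Nat.card f.ker = p := by
    have h := card_ker_mul_card_range f
    rw [hrange_card, show (Nat.card R) = p ^ 3 by rw [Nat.card_eq_fintype_card, hcard]] at h
    have hppos : 0 < p ^ 2 := by positivity
    have : Nat.card f.ker * p ^ 2 = p * p ^ 2 := by rw [h]; ring
    exact Nat.eq_of_mul_eq_mul_right hppos this
  -- kernel is inside zmultiples (p • l)
  have hkerP : ∀ n : R, n ∈ f.ker → ∃ k : ℤ, k • (p • l) = n := by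
    intro n hn
    have hpn : p • n = 0 := by
      apply addOrderOf_dvd_iff_nsmul_eq_zero.mp
      rw [← hker_card] at *
      exact AddSubgroup.addOrderOf_dvd_natCard f.ker hn
    have hnLS : n ∈ LS := by
      rw [hmem]
      rintro ⟨v, hv1, hv2⟩
      apply hc0
      rw [hc, ← hv2, ← N.mul_nsmul', hpn, N.mul_zero']
    exact hPtor n hnLS hpn
  -- c belongs to the kernel : contradiction
  have hcP : ∃ k : ℤ, k • (p • l) = c := hPtor c hcLS hpc
  have hsub : (f.ker : Set R) ⊆ (zmultiples (p • l) : Set R) := by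
    intro n hn
    obtain ⟨k, hk⟩ := hkerP n hn
    exact ⟨k, hk⟩
  have hpl_card : Nat.card (zmultiples (p • l)) = p := by
    rw [Nat.card_zmultiples]
    have hdvd : addOrderOf (p • l) ∣ p := by
      apply addOrderOf_dvd_iff_nsmul_eq_zero.mpr
      rw [← mul_nsmul, ← pow_two]
      exact addOrderOf_dvd_iff_nsmul_eq_zero.mp (by rw [hordl])
    rcases (Nat.dvd_prime hp).mp hdvd with h | h
    · exfalso; exact hpl (AddMonoid.addOrderOf_eq_one_iff.mp h)
    · exact h
  have hseteq : (f.ker : Set R) = (zmultiples (p • l) : Set R) := by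
    apply Set.eq_of_subset_of_ncard_le hsub ?_ (Set.toFinite _)
    rw [← Nat.card_coe_set_eq, ← Nat.card_coe_set_eq]
    show Nat.card (zmultiples (p • l)) ≤ Nat.card f.ker
    rw [hpl_card, hker_card]
  have hcker : c ∈ f.ker := by
    rw [← SetLike.mem_coe, hseteq]
    obtain ⟨k, hk⟩ := hcP
    exact ⟨k, hk⟩
  have : N.mul l c = 0 := hcker
  rw [hxc l] at this
  exact hpl this

end Main

/-- Let `R` be a local nearring of order `p³` which is not isomorphic to
`ℤ/p³ℤ` and is not a nearfield.  Then the subgroup `L` of non-invertible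
elements is elementary abelian of order `p²`. -/
theorem local_nearring_p3_L_elementary_abelian (p : ℕ) (hp : p.Prime)
    {R : Type*} [AddGroup R] [Fintype R] (hcard : Fintype.card R = p ^ 3)
    (mul : R → R → R)
    (hassoc : ∀ x y z : R, mul (mul x y) z = mul x (mul y z))
    (hdist : ∀ x y z : R, mul x (y + z) = mul x y + mul x z)
    (i : R) (hid : ∀ x : R, mul i x = x ∧ mul x i = x)
    (L : Set R) (hL : L = {x : R | ¬ ∃ v : R, mul x v = i ∧ mul v x = i})
    (LS : AddSubgroup R) (hLS : (LS : Set R) = L)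
    (hnotring : ¬ ∃ e : R ≃ ZMod (p ^ 3),
      (∀ x y : R, e (x + y) = e x + e y) ∧ ∀ x y : R, e (mul x y) = e x * e y)
    (hnotnearfield : ∃ x : R, x ≠ 0 ∧ x ∈ L) :
    Nat.card L = p ^ 2 ∧ (∀ z ∈ L, p • z = 0) ∧
      ∀ z ∈ L, ∀ w ∈ L, z + w = w + z := by
  haveI : Fact p.Prime := ⟨hp⟩
  have hp2 : 2 ≤ p := hp.two_le
  set N : NRS R := ⟨mul, i, hassoc, hdist, hid⟩ with hN
  have hmem : ∀ x, x ∈ LS ↔ ¬ N.IsU x := by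
    intro x
    have h1 : x ∈ LS ↔ x ∈ (LS : Set R) := Iff.rfl
    rw [h1, hLS, hL]
    rfl
  obtain ⟨a, ha0, haL'⟩ := hnotnearfield
  have haL : a ∈ LS := by rw [← SetLike.mem_coe, hLS]; exact haL'
  have hp2i : (p ^ 2) • N.i = 0 := ord_i_sq N p hp hcard hnotring
  -- the cardinality of LS
  have hdvd : Nat.card LS ∣ p ^ 3 := by
    rw [← Nat.card_eq_fintype_card] at hcard
    exact hcard ▸ AddSubgroup.card_addSubgroup_dvd_card LS
  obtain ⟨k, hk3, hk⟩ := (Nat.dvd_prime_pow hp).mp hdvd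
  have hk0 : k ≠ 0 := by
    intro h
    rw [h, pow_zero, AddSubgroup.card_eq_one] at hk
    rw [hk] at haL
    exact ha0 haL
  have hk3' : k ≠ 3 := by
    intro h
    rw [h] at hk
    have : LS = ⊤ := AddSubgroup.eq_top_of_card_eq LS (by
      rw [hk, Nat.card_eq_fintype_card, hcard])
    have hiL : N.i ∈ LS := this ▸ AddSubgroup.mem_top N.i
    exact (hmem N.i).mp hiL N.isU_i
  have hk1 : k ≠ 1 := by
    intro h
    rw [h, pow_one] at hk
    exact main_A N p hp hcard LS hmem ha0 haL hp2i hk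
  have hk2 : k = 2 := by omega
  rw [hk2] at hk
  have hLcard : Nat.card L = p ^ 2 := by
    rw [← hLS, SetLike.coe_sort_coe]
    exact hk
  have hmemL : ∀ z, z ∈ L → z ∈ LS := fun z hz => by
    rw [← SetLike.mem_coe, hLS]; exact hz
  have hpart2 : ∀ z ∈ L, p • z = 0 := by
    intro z hz
    by_contra hne
    exact main_B N p hp hcard LS hmem hk hp2i (hmemL z hz) hne
  refine ⟨hLcard, hpart2, ?_⟩
  -- commutativity : a group of order p^2 is commutative
  intro z hz w hw
  have hzz : z ∈ LS := hmemL z hz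
  have hww : w ∈ LS := hmemL w hw
  have hcardM : Nat.card (Multiplicative LS) = p ^ 2 := by
    rw [Nat.card_congr (Multiplicative.ofAdd).symm]
    exact hk
  have hcomm := IsPGroup.commutative_of_card_eq_prime_sq (p := p) hcardM
  have h := hcomm (Multiplicative.ofAdd (⟨z, hzz⟩ : LS)) (Multiplicative.ofAdd (⟨w, hww⟩ : LS))
  rw [← ofAdd_add, ← ofAdd_add] at h
  have h2 : (⟨z, hzz⟩ : LS) + ⟨w, hww⟩ = ⟨w, hww⟩ + ⟨z, hzz⟩ := Multiplicative.ofAdd.injective h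
  have h3 := congrArg (fun t : LS => (t : R)) h2
  simpa using h3
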